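/- Let X be a topological space, F a flasque sheaf of abelian groups on X, and suppose F is equipped with a decreasing filtration by subsheaves F ⊇ F_1 ⊇ F_2 ⊇ … such that each quotient F/F_n is flasque and for every open V, Γ(V, F_n) equals the image of a fixed submodule structure making restriction maps of Γ(−,F)/Γ(−,F_n) surjective. Then the inverse limit sheaf F^ = lim_n F/F_n is flasque. -/

import Mathlib

open TopologicalSpace CategoryTheory Opposite

/-- The inverse limit of an `ℕ`-indexed inverse system of abelian groups, realized as the
subgroup of the product consisting of compatible sequences. -/
def invLimAdd {P : ℕ → Type*} [∀ n, AddCommGroup (P n)] (t : ∀ n, P (n + 1) →+ P n) :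
    AddSubgroup (∀ n, P n) where
  carrier := {p | ∀ n, t n (p (n + 1)) = p n}
  add_mem' := fun {a b} ha hb n => by simp [ha n, hb n]
  zero_mem' := fun n => by simp
  neg_mem' := fun {a} ha n => by simp [ha n]

/-- Dependent choice for building a sequence with an invariant and a step relation. -/
lemma depChoiceAux {α : Type*} (C : ℕ → α → Prop) (R : ℕ → α → α → Prop)
    (h0 : ∃ x, C 0 x) (hs : ∀ n x, C n x → ∃ y, C (n + 1) y ∧ R n x y) :
    ∃ a : ℕ → α, (∀ n, C n (a n)) ∧ ∀ n, R n (a n) (a (n + 1)) := by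
  choose x0 hx0 using h0
  choose f hf1 hf2 using hs
  let a : ∀ n, {x // C n x} :=
    fun n => Nat.rec ⟨x0, hx0⟩ (fun n p => ⟨f n p.1 p.2, hf1 n p.1 p.2⟩) n
  refine ⟨fun n => (a n).1, fun n => (a n).2, fun n => ?_⟩
  exact hf2 n (a n).1 (a n).2

/-- Let `X` be a topological space and `F` a flasque presheaf of abelian groups on `X`,
equipped with a decreasing filtration by sub-presheaves `F ⊇ F_1 ⊇ F_2 ⊇ ⋯` (given by subgroups
`S n U ≤ Γ(U, F)` compatible with restriction) such that for every `V ⊆ U` the restriction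
carries `Γ(U, F_n)` onto `Γ(V, F_n)` (equivalently, each quotient `F/F_n` is flasque and
sections of the quotients lift).  Then the completion `F^`, with
`Γ(V, F^) = lim_n Γ(V, F)/Γ(V, F_n)`, is flasque: for all opens `V ⊆ U` the restriction map
`Γ(U, F^) → Γ(V, F^)` is surjective. -/
theorem completion_flasque {X : TopCat} (F : (Opens X)ᵒᵖ ⥤ AddCommGrpCat)
    (hflasque : ∀ (U V : Opens X) (h : V ≤ U), Function.Surjective (F.map h.hom.op).hom)
    (S : ℕ → ∀ U : Opens X, AddSubgroup (F.obj (op U)))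
    (hmono : ∀ n U, S (n + 1) U ≤ S n U)
    (himage : ∀ n (U V : Opens X) (h : V ≤ U), (S n U).map (F.map h.hom.op).hom = S n V)
    (U V : Opens X) (h : V ≤ U) :
    ∀ q : ∀ n, F.obj (op V) ⧸ S n V,
      q ∈ invLimAdd (fun n =>
        QuotientAddGroup.map (S (n + 1) V) (S n V) (AddMonoidHom.id _) (hmono n V)) →
      ∃ p : ∀ n, F.obj (op U) ⧸ S n U,
        p ∈ invLimAdd (fun n =>
          QuotientAddGroup.map (S (n + 1) U) (S n U) (AddMonoidHom.id _) (hmono n U)) ∧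
        ∀ n, QuotientAddGroup.map (S n U) (S n V) (F.map h.hom.op).hom
            (fun x hx => by
              simp only [AddSubgroup.mem_comap]
              exact (himage n U V h) ▸ AddSubgroup.mem_map_of_mem _ hx) (p n) = q n := by
  intro q hq
  set res : F.obj (op U) →+ F.obj (op V) := (F.map h.hom.op).hom with hres
  -- the invariant and step relation
  have key : ∃ a : ℕ → F.obj (op U),
      (∀ n, QuotientAddGroup.mk' (S n V) (res (a n)) = q n) ∧
      ∀ n, a (n + 1) - a n ∈ S n U := by
    apply depChoiceAux (fun n x => QuotientAddGroup.mk' (S n V) (res x) = q n)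
      (fun n x y => y - x ∈ S n U)
    · -- base case
      obtain ⟨b, hb⟩ := QuotientAddGroup.mk'_surjective (S 0 V) (q 0)
      obtain ⟨x, hx⟩ := hflasque U V h b
      exact ⟨x, by rw [show res x = b from hx, hb]⟩
    · -- step
      intro n x hx
      obtain ⟨b, hb⟩ := QuotientAddGroup.mk'_surjective (S (n + 1) V) (q (n + 1))
      have hbn : QuotientAddGroup.mk' (S n V) b = q n := by
        have := hq n
        rw [← hb] at this
        rw [← this]; rfl
      have hsub : res x - b ∈ S n V := by
        rw [← QuotientAddGroup.eq_iff_sub_mem]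
        exact hx.trans hbn.symm
      rw [← himage n U V h] at hsub
      obtain ⟨c, hc, hc2⟩ := hsub
      refine ⟨x - c, ?_, by simpa using (S n U).neg_mem hc⟩
      have : res (x - c) = b := by
        rw [map_sub, hc2]; abel
      rw [this, hb]
  obtain ⟨a, ha1, ha2⟩ := key
  refine ⟨fun n => QuotientAddGroup.mk' (S n U) (a n), fun n => ?_, fun n => ?_⟩
  · show QuotientAddGroup.map _ _ _ _ _ = _
    simp only [QuotientAddGroup.map_mk', AddMonoidHom.id_apply, QuotientAddGroup.mk'_apply]
    exact (QuotientAddGroup.eq_iff_sub_mem).mpr (ha2 n)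
  · rw [QuotientAddGroup.map_mk']
    exact ha1 n
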